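/- Let n ≥ 1 and m = n + 1. In the polynomial ring ℝ[P_{i,j} : i ∈ [m], j ∈ [n]], there exist finitely many pairs (p_t, q_t), where each p_t is a polynomial with nonnegative coefficients and each q_t is one of the axiom polynomials Σ_{j=1}^{n} P_{i,j} − 1 (i ∈ [m]), 1 − P_{i,j} − P_{i',j} (i ≠ i' ∈ [m], j ∈ [n]), P_{i,j}, or 1 − P_{i,j}, together with finitely many polynomials r_s, such that every ML(p_t q_t) and every ML(r_s²) has degree at most 2 and Σ_t ML(p_t q_t) + Σ_s ML(r_s²) = −1. That is, the unary pigeonhole principle PHP^{n+1}_n has an SA+Squares refutation of degree 2. -/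

import Mathlib

open MvPolynomial in
/-- Multilinearization: the unique multilinear polynomial agreeing with `p` on all 0/1
assignments, obtained by replacing every power `x^k` with `k ≥ 1` by `x`. -/
noncomputable def ML {σ : Type} (p : MvPolynomial σ ℝ) : MvPolynomial σ ℝ :=
  ∑ s ∈ p.support,
    monomial (Finsupp.mapRange (fun e => min e 1) (by simp) s) (p.coeff s)

open MvPolynomial in
/-- The axiom polynomials of the unary pigeonhole principle `PHP^m_n`: the pigeon
axioms `Σ_j P_{i,j} − 1`, the hole axioms `1 − P_{i,j} − P_{i',j}` (`i ≠ i'`), and the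
bounding axioms `P_{i,j}` and `1 − P_{i,j}`. -/
def phpAxiom (m n : ℕ) (q : MvPolynomial (Fin m × Fin n) ℝ) : Prop :=
  (∃ i : Fin m, q = (∑ j : Fin n, X (i, j)) - 1) ∨
  (∃ (i i' : Fin m) (j : Fin n), i ≠ i' ∧ q = 1 - X (i, j) - X (i', j)) ∨
  (∃ x : Fin m × Fin n, q = X x) ∨
  (∃ x : Fin m × Fin n, q = 1 - X x)

namespace PHPAux

open MvPolynomial Finsupp

variable {σ : Type}

/-- Squashing of an exponent vector. -/
noncomputable def sq (s : σ →₀ ℕ) : σ →₀ ℕ := s.mapRange (fun e => min e 1) (by simp)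

lemma ML_eq (p : MvPolynomial σ ℝ) :
    ML p = AddMonoidAlgebra.mapDomainLinearMap ℝ ℝ sq p := by
  conv_rhs => rw [p.as_sum]
  rw [map_sum, ML]
  exact Finset.sum_congr rfl fun s _ => by
    rw [← single_eq_monomial s (coeff s p), AddMonoidAlgebra.mapDomainLinearMap_single]
    rfl

lemma ML_add (p q : MvPolynomial σ ℝ) : ML (p + q) = ML p + ML q := by
  rw [ML_eq, ML_eq, ML_eq, map_add]

lemma ML_sub (p q : MvPolynomial σ ℝ) : ML (p - q) = ML p - ML q := by
  rw [ML_eq, ML_eq, ML_eq, map_sub]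

lemma ML_zero : ML (0 : MvPolynomial σ ℝ) = 0 := by
  rw [ML_eq, map_zero]

lemma ML_sum {ι : Type*} (s : Finset ι) (f : ι → MvPolynomial σ ℝ) :
    ML (∑ i ∈ s, f i) = ∑ i ∈ s, ML (f i) := by
  simp only [ML_eq, map_sum]

lemma ML_monomial (s : σ →₀ ℕ) (c : ℝ) : ML (monomial s c) = monomial (sq s) c := by
  rw [ML_eq, ← single_eq_monomial, AddMonoidAlgebra.mapDomainLinearMap_single,
    single_eq_monomial]

lemma sq_single (a : σ) (k : ℕ) : sq (Finsupp.single a k) = Finsupp.single a (min k 1) := by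
  rw [sq, Finsupp.mapRange_single]

lemma sq_pair {a b : σ} (hab : a ≠ b) {j k : ℕ} (hj : j ≠ 0) (hk : k ≠ 0) :
    sq (Finsupp.single a j + Finsupp.single b k)
      = Finsupp.single a 1 + Finsupp.single b 1 := by
  ext x
  rw [sq, Finsupp.mapRange_apply]
  by_cases hx : x = a
  · subst hx
    simp [Finsupp.single_apply, hab, Ne.symm hab, Nat.one_le_iff_ne_zero.mpr hj]
  · by_cases hx' : x = b
    · subst hx'
      simp [Finsupp.single_apply, hab, Ne.symm hab, Nat.one_le_iff_ne_zero.mpr hk]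
    · simp [Finsupp.single_apply, Ne.symm hx, Ne.symm hx']

lemma ML_one : ML (1 : MvPolynomial σ ℝ) = 1 := by
  rw [show (1 : MvPolynomial σ ℝ) = monomial 0 1 by rw [← C_apply, C_1], ML_monomial]
  rw [show sq (0 : σ →₀ ℕ) = 0 by simp [sq], ← C_apply, C_1]

lemma X_eq_monomial (a : σ) : (X a : MvPolynomial σ ℝ) = monomial (Finsupp.single a 1) 1 :=
  rfl

lemma ML_X (a : σ) : ML (X a : MvPolynomial σ ℝ) = X a := by
  rw [X_eq_monomial, ML_monomial, sq_single]
  norm_num [← X_eq_monomial]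

lemma ML_X_mul_X [DecidableEq σ] (a b : σ) :
    ML (X a * X b : MvPolynomial σ ℝ) = if a = b then X a else X a * X b := by
  have h : (X a * X b : MvPolynomial σ ℝ)
      = monomial (Finsupp.single a 1 + Finsupp.single b 1) 1 := by
    rw [X_eq_monomial, X_eq_monomial, monomial_mul, one_mul]
  by_cases hab : a = b
  · subst hab
    rw [if_pos rfl, h, ← Finsupp.single_add, ML_monomial, sq_single]
    norm_num [← X_eq_monomial]
  · rw [if_neg hab, h, ML_monomial, sq_pair hab one_ne_zero one_ne_zero, ← h]

lemma ML_sq_X_mul_X {a b : σ} (hab : a ≠ b) :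
    ML ((X a) ^ 2 * X b : MvPolynomial σ ℝ) = X a * X b := by
  have h : ((X a) ^ 2 * X b : MvPolynomial σ ℝ)
      = monomial (Finsupp.single a 2 + Finsupp.single b 1) 1 := by
    rw [X_pow_eq_monomial, X_eq_monomial, monomial_mul, one_mul]
  rw [h, ML_monomial, sq_pair hab two_ne_zero one_ne_zero]
  rw [X_eq_monomial, X_eq_monomial, monomial_mul, one_mul]

lemma ML_hole [DecidableEq σ] {a b : σ} (hab : a ≠ b) :
    ML (X a * X b * (1 - X a - X b) : MvPolynomial σ ℝ) = -(X a * X b) := by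
  have h : (X a * X b * (1 - X a - X b) : MvPolynomial σ ℝ)
      = X a * X b - (X a) ^ 2 * X b - (X b) ^ 2 * X a := by ring
  rw [h, ML_sub, ML_sub, ML_X_mul_X, if_neg hab, ML_sq_X_mul_X hab,
    ML_sq_X_mul_X (Ne.symm hab)]
  ring

end PHPAux

open MvPolynomial PHPAux in
/-- The unary pigeonhole principle `PHP^{n+1}_n` has an SA+Squares refutation of
degree 2: an identity `−1 = Σ_t ML(p_t q_t) + Σ_s ML(r_s²)` where each `p_t` has
nonnegative coefficients, each `q_t` is an axiom polynomial, and all the multilinearized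
products have total degree at most 2. -/
theorem PHP_SAplusSquares_degree_two (n : ℕ) (hn : 1 ≤ n) :
    ∃ (K L : ℕ) (p q : Fin K → MvPolynomial (Fin (n + 1) × Fin n) ℝ)
      (r : Fin L → MvPolynomial (Fin (n + 1) × Fin n) ℝ),
      (∀ t, ∀ s, 0 ≤ (p t).coeff s) ∧
      (∀ t, phpAxiom (n + 1) n (q t)) ∧
      (∀ t, (ML (p t * q t)).totalDegree ≤ 2) ∧
      (∀ s, (ML (r s ^ 2)).totalDegree ≤ 2) ∧
      (∑ t, ML (p t * q t)) + (∑ s, ML (r s ^ 2)) = -1 := by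
  classical
  set σ := Fin (n + 1) × Fin n with hσ
  set P : (Fin (n + 1) ⊕ (Fin (n + 1) × Fin (n + 1) × Fin n)) → MvPolynomial σ ℝ :=
    Sum.elim (fun _ => 1)
      (fun x => if x.1 = x.2.1 then 0 else X (x.1, x.2.2) * X (x.2.1, x.2.2)) with hP
  set Q : (Fin (n + 1) ⊕ (Fin (n + 1) × Fin (n + 1) × Fin n)) → MvPolynomial σ ℝ :=
    Sum.elim (fun i => (∑ j : Fin n, X (i, j)) - 1)
      (fun x => if x.1 = x.2.1 then X (x.1, x.2.2)
        else 1 - X (x.1, x.2.2) - X (x.2.1, x.2.2)) with hQ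
  set R : Fin n → MvPolynomial σ ℝ := fun j => 1 - ∑ i : Fin (n + 1), X (i, j) with hR
  set K := Fintype.card (Fin (n + 1) ⊕ (Fin (n + 1) × Fin (n + 1) × Fin n)) with hK
  set e : Fin K ≃ (Fin (n + 1) ⊕ (Fin (n + 1) × Fin (n + 1) × Fin n)) :=
    (Fintype.equivFin _).symm with he
  refine ⟨K, n, P ∘ e, Q ∘ e, R, ?_, ?_, ?_, ?_, ?_⟩
  · -- nonneg coefficients
    intro t s
    simp only [Function.comp_apply]
    rcases e t with i | ⟨i, i', j⟩
    · simp only [hP, Sum.elim_inl, coeff_one]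
      split <;> norm_num
    · simp only [hP, Sum.elim_inr]
      split
      · simp
      · rw [X_eq_monomial, X_eq_monomial, monomial_mul, one_mul, coeff_monomial]
        split <;> norm_num
  · -- axioms
    intro t
    simp only [Function.comp_apply]
    rcases e t with i | ⟨i, i', j⟩
    · exact Or.inl ⟨i, by simp [hQ]⟩
    · simp only [hQ, Sum.elim_inr]
      by_cases h : i = i'
      · rw [if_pos h]
        exact Or.inr (Or.inr (Or.inl ⟨(i, j), rfl⟩))
      · rw [if_neg h]
        exact Or.inr (Or.inl ⟨i, i', j, h, rfl⟩)
  · -- degree of the products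
    intro t
    simp only [Function.comp_apply]
    rcases e t with i | ⟨i, i', j⟩
    · simp only [hP, hQ, Sum.elim_inl, one_mul]
      rw [ML_sub, ML_sum, ML_one]
      refine (totalDegree_sub _ _).trans (max_le ?_ (by simp))
      refine (totalDegree_finset_sum _ _).trans ?_
      refine Finset.sup_le fun j _ => ?_
      rw [ML_X]
      exact (totalDegree_X _).le.trans one_le_two
    · simp only [hP, hQ, Sum.elim_inr]
      by_cases h : i = i'
      · rw [if_pos h, if_pos h, zero_mul, ML_zero]
        simp
      · rw [if_neg h, if_neg h, ML_hole (fun hc => h (congrArg Prod.fst hc)), totalDegree_neg]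
        exact (totalDegree_mul _ _).trans (by simp [totalDegree_X])
  · -- degree of the squares
    intro j
    have hsq : R j ^ 2 = 1 - (∑ i : Fin (n + 1), X (i, j)) - (∑ i : Fin (n + 1), X (i, j))
        + (∑ i : Fin (n + 1), X (i, j)) * (∑ i : Fin (n + 1), X (i, j)) := by
      rw [hR]; ring
    rw [hsq, ML_add, ML_sub, ML_sub, ML_one, ML_sum, Finset.sum_mul_sum, ML_sum]
    refine (totalDegree_add _ _).trans (max_le ?_ ?_)
    · refine (totalDegree_sub _ _).trans
        (max_le ((totalDegree_sub _ _).trans (max_le ?_ ?_)) ?_)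
      · simp
      all_goals
        refine (totalDegree_finset_sum _ _).trans (Finset.sup_le fun i _ => ?_)
        rw [ML_X]
        exact (totalDegree_X _).le.trans one_le_two
    · refine (totalDegree_finset_sum _ _).trans (Finset.sup_le fun i _ => ?_)
      rw [ML_sum]
      refine (totalDegree_finset_sum _ _).trans (Finset.sup_le fun i' _ => ?_)
      rw [ML_X_mul_X]
      split
      · exact (totalDegree_X _).le.trans one_le_two
      · exact (totalDegree_mul _ _).trans (by simp [totalDegree_X])
  · -- the main identity
    simp only [Function.comp_apply]
    rw [Equiv.sum_comp e (fun t => ML (P t * Q t))]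
    have hPQ : ∀ t, ML (P t * Q t) =
        Sum.elim (fun i : Fin (n + 1) => (∑ j : Fin n, X ((i, j) : σ)) - 1)
          (fun x : Fin (n + 1) × Fin (n + 1) × Fin n =>
            if x.1 = x.2.1 then 0 else -(X ((x.1, x.2.2) : σ) * X (x.2.1, x.2.2))) t := by
      rintro (i | ⟨i, i', j⟩)
      · simp only [hP, hQ, Sum.elim_inl, one_mul]
        rw [ML_sub, ML_sum, ML_one]
        simp [ML_X]
      · simp only [hP, hQ, Sum.elim_inr]
        by_cases h : i = i'
        · rw [if_pos h, if_pos h, if_pos h, zero_mul, ML_zero]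
        · rw [if_neg h, if_neg h, if_neg h, ML_hole (fun hc => h (congrArg Prod.fst hc))]
    have hRR : ∀ j : Fin n, ML (R j ^ 2) =
        1 - (∑ i : Fin (n + 1), X ((i, j) : σ))
          + ∑ i : Fin (n + 1), ∑ i' : Fin (n + 1),
              (if i = i' then 0 else X ((i, j) : σ) * X (i', j)) := by
      intro j
      have hsq : R j ^ 2 = 1 - (∑ i : Fin (n + 1), X (i, j)) - (∑ i : Fin (n + 1), X (i, j))
          + (∑ i : Fin (n + 1), X (i, j)) * (∑ i : Fin (n + 1), X (i, j)) := by
        rw [hR]; ring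
      rw [hsq, ML_add, ML_sub, ML_sub, ML_one, ML_sum, Finset.sum_mul_sum, ML_sum]
      have hin : ∀ i : Fin (n + 1),
          ML (∑ i' : Fin (n + 1), (X ((i, j) : σ) * X (i', j)))
            = X ((i, j) : σ) + ∑ i' : Fin (n + 1),
                (if i = i' then 0 else X ((i, j) : σ) * X (i', j)) := by
        intro i
        rw [ML_sum]
        have hterm : ∀ i' : Fin (n + 1), ML (X ((i, j) : σ) * X (i', j))
            = (if i = i' then X ((i, j) : σ) else 0)
              + (if i = i' then 0 else X ((i, j) : σ) * X (i', j)) := by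
          intro i'
          rw [ML_X_mul_X]
          by_cases h : i = i'
          · simp [h]
          · have hne : ((i, j) : σ) ≠ (i', j) := by simp [Prod.ext_iff, h]
            simp [h, hne]
        rw [Finset.sum_congr rfl fun i' _ => hterm i', Finset.sum_add_distrib,
          Finset.sum_ite_eq (Finset.univ : Finset (Fin (n + 1))) i
            (fun _ => X ((i, j) : σ)), if_pos (Finset.mem_univ i)]
      rw [Finset.sum_congr rfl fun i _ => hin i, Finset.sum_add_distrib]
      simp only [ML_X]
      ring
    rw [Finset.sum_congr rfl fun t _ => hPQ t, Finset.sum_congr rfl fun j _ => hRR j,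
      Fintype.sum_sum_type]
    simp only [Sum.elim_inl, Sum.elim_inr]
    have hmid : (∑ x : Fin (n + 1) × Fin (n + 1) × Fin n,
        (if x.1 = x.2.1 then (0 : MvPolynomial σ ℝ)
          else -(X ((x.1, x.2.2) : σ) * X (x.2.1, x.2.2))))
        = -(∑ j : Fin n, ∑ i : Fin (n + 1), ∑ i' : Fin (n + 1),
            (if i = i' then 0 else X ((i, j) : σ) * X (i', j))) := by
      have hneg : ∀ x : Fin (n + 1) × Fin (n + 1) × Fin n,
          (if x.1 = x.2.1 then (0 : MvPolynomial σ ℝ)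
            else -(X ((x.1, x.2.2) : σ) * X (x.2.1, x.2.2)))
          = -(if x.1 = x.2.1 then 0 else X ((x.1, x.2.2) : σ) * X (x.2.1, x.2.2)) := by
        intro x; split <;> simp
      rw [Finset.sum_congr rfl fun x _ => hneg x, Finset.sum_neg_distrib, neg_inj]
      rw [Fintype.sum_prod_type]
      simp_rw [Fintype.sum_prod_type]
      have h3 : ∀ F : Fin (n + 1) → Fin (n + 1) → Fin n → MvPolynomial σ ℝ,
          (∑ i : Fin (n + 1), ∑ i' : Fin (n + 1), ∑ j : Fin n, F i i' j)
            = ∑ j : Fin n, ∑ i : Fin (n + 1), ∑ i' : Fin (n + 1), F i i' j := by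
        intro F
        calc (∑ i : Fin (n + 1), ∑ i' : Fin (n + 1), ∑ j : Fin n, F i i' j)
            = ∑ i : Fin (n + 1), ∑ j : Fin n, ∑ i' : Fin (n + 1), F i i' j :=
              Finset.sum_congr rfl fun i _ => Finset.sum_comm
          _ = ∑ j : Fin n, ∑ i : Fin (n + 1), ∑ i' : Fin (n + 1), F i i' j :=
              Finset.sum_comm
      exact h3 fun i i' j => if i = i' then 0 else X ((i, j) : σ) * X (i', j)
    rw [hmid]
    simp only [Finset.sum_sub_distrib, Finset.sum_add_distrib, Finset.sum_const,
      Finset.card_univ, Fintype.card_fin, nsmul_eq_mul, mul_one]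
    have hS : (∑ i : Fin (n + 1), ∑ j : Fin n, (X ((i, j) : σ) : MvPolynomial σ ℝ))
        = ∑ j : Fin n, ∑ i : Fin (n + 1), (X ((i, j) : σ) : MvPolynomial σ ℝ) :=
      Finset.sum_comm
    rw [hS]
    push_cast
    ring
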